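/- arXiv:2011.02349 — 2 statements merged into one kernel-verified Lean document; each statement's English description precedes it below -/
import Mathlib

section
/- In the epidemic setting with severity, testing and app usage, let t ∈ ℝ with Ω_t nonempty, let τ > 0, g in the range of G, and a ∈ {app, no app}, with Ω_{t−τ,g,a} nonempty. Assume: (i) there is a quantity c (independent of a) such that for each a' ∈ {app, no app} with Ω_{t−τ,g,a'} nonempty, E_{P_{t−τ,g,a'}}(n^τ) = c·(1 − ξ_{t−τ}·F^T_{t−τ,g,a'}(τ)); (ii) on Ω_{t−τ}, A is independent of G, i.e. P_{t−τ}(A = a' | G = g) = ε_{t−τ,a'} := P_{t−τ}(A = a') for every a' and every g with Ω_{t−τ,g} nonempty; and (iii) 1 − ξ_{t−τ}·F^T_{t−τ,g,a}(τ) > 0 and 1 − ξ_{t−τ}·F^T_{t−τ,g}(τ) > 0. Then P_t(τ^σ_t = τ, Ĝ_t = g, Â_t = a)/(1 − ξ_{t−τ}·F^T_{t−τ,g,a}(τ)) = ε_{t−τ,a} · P_t(τ^σ_t = τ, Ĝ_t = g)/(1 − ξ_{t−τ}·F^T_{t−τ,g}(τ)). -/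
open Finset
open scoped Classical ENNReal NNReal

noncomputable section

variable {Ω : Type*} [Fintype Ω]

/-- Number of elements of `Ω` satisfying `E`, as a real number. -/
def cnt (E : Ω → Prop) : ℝ := ((Finset.univ.filter E).card : ℝ)

/-- The uniform (counting) probability of the event `E`. -/
def pr (E : Ω → Prop) : ℝ := cnt E / (Fintype.card Ω : ℝ)

/-- The conditional probability of the event `E` given the event `C`
(junk value `0` if `C` is empty). -/
def prC (C E : Ω → Prop) : ℝ := cnt (fun ω => C ω ∧ E ω) / cnt C

/-- The expectation of `X` under the uniform probability measure. -/
def expec (X : Ω → ℝ) : ℝ := (∑ ω, X ω) / (Fintype.card Ω : ℝ)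

/-- The conditional expectation of `X` given the event `C`, i.e. the average of `X`
over `C` (junk value `0` if `C` is empty). -/
def expecC (C : Ω → Prop) (X : Ω → ℝ) : ℝ :=
  (∑ ω ∈ Finset.univ.filter C, X ω) / cnt C

end

/-- Whether or not an individual uses the contact-tracing app. -/
inductive AppUse : Type
  | app : AppUse
  | noapp : AppUse
  deriving DecidableEq

instance instFintypeAppUse : Fintype AppUse where
  elems := {AppUse.app, AppUse.noapp}
  complete := by intro x; cases x <;> simp


noncomputable section

variable {Ω : Type*} [Fintype Ω]

/-- `ninf tI σ τ ω` is the number of people infected by `ω` exactly at `ω`'s infectious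
age `τ`: the number of `ω' ∈ Ω_{>0}` with `σ ω' = ω` and generation time `τ^σ ω' = τ`. -/
def ninf (tI : Ω → ℝ) (σ : Ω → Ω) (τ : ℝ) (ω : Ω) : ℝ :=
  cnt (fun ω' => 0 < tI ω' ∧ σ ω' = ω ∧ tI ω' - tI (σ ω') = τ)

/-- The (finitely many) positive times `τ` such that `Ω_{t-τ}` is nonempty. -/
def genTimes (tI : Ω → ℝ) (t : ℝ) : Finset ℝ :=
  (Finset.univ.image (fun ω' => t - tI ω')).filter (fun τ => 0 < τ)

end

noncomputable section

variable {Ω : Type*} [Fintype Ω]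

/-- The (finitely many) positive times `τ` such that `Ω_{t-τ,g,a}` is nonempty. -/
def genTimesGA (tI G : Ω → ℝ) (A : Ω → AppUse) (t g : ℝ) (a : AppUse) : Finset ℝ :=
  ((Finset.univ.filter (fun ω' => G ω' = g ∧ A ω' = a)).image (fun ω' => t - tI ω')).filter
    (fun τ => 0 < τ)

/-- `FT tI G τT t' g τ` is the improper CDF `F^T_{t',g}(τ) = P_{t',g}(τ^T ≤ τ)` of the
testing time of individuals infected at `t'` with severity `g`. -/
def FT (tI G : Ω → ℝ) (τT : Ω → ℝ≥0∞) (t' g τ : ℝ) : ℝ :=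
  prC (fun ω => tI ω = t' ∧ G ω = g) (fun ω => (τT ω : EReal) ≤ (τ : ℝ))

/-- `FTa tI G A τT t' g a τ` is the improper CDF
`F^T_{t',g,a}(τ) = P_{t',g,a}(τ^T ≤ τ)` of the testing time of individuals infected at
`t'` with severity `g` and app usage `a`. -/
def FTa (tI G : Ω → ℝ) (A : Ω → AppUse) (τT : Ω → ℝ≥0∞) (t' g : ℝ) (a : AppUse)
    (τ : ℝ) : ℝ :=
  prC (fun ω => tI ω = t' ∧ G ω = g ∧ A ω = a) (fun ω => (τT ω : EReal) ≤ (τ : ℝ))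

end


noncomputable section
variable {Ω : Type*} [Fintype Ω]

lemma cnt_eq_sum (E : Ω → Prop) :
    cnt E = ∑ ω, if E ω then (1:ℝ) else 0 := by
  classical
  rw [cnt, Finset.card_filter]
  push_cast
  rfl

lemma cnt_congr {P Q : Ω → Prop} (h : ∀ ω, P ω ↔ Q ω) : cnt P = cnt Q := by
  simp only [cnt_eq_sum]
  exact Finset.sum_congr rfl (fun ω _ => by simp [h ω])

lemma cnt_nonneg (P : Ω → Prop) : 0 ≤ cnt P := by unfold cnt; positivity

lemma cnt_eq_zero_iff (P : Ω → Prop) : cnt P = 0 ↔ ∀ ω, ¬ P ω := by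
  simp [cnt, Finset.filter_eq_empty_iff]

lemma cnt_pos_of_exists {P : Ω → Prop}
    (h : ∃ ω, P ω) : 0 < cnt P := by
  obtain ⟨ω, hω⟩ := h
  unfold cnt
  exact_mod_cast Finset.card_pos.mpr ⟨ω, Finset.mem_filter.mpr ⟨Finset.mem_univ _, hω⟩⟩

lemma sum_cnt_fiber (S Q : Ω → Prop) (σ : Ω → Ω) :
    ∑ ω ∈ Finset.univ.filter S, cnt (fun ω' => Q ω' ∧ σ ω' = ω) =
      cnt (fun ω' => Q ω' ∧ S (σ ω')) := by
  classical
  simp only [cnt_eq_sum]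
  rw [Finset.sum_comm]
  apply Finset.sum_congr rfl
  intro ω' _
  by_cases hQ : Q ω'
  · simp only [hQ, true_and]
    rw [Finset.sum_ite_eq (Finset.univ.filter S) (σ ω') (fun _ => (1:ℝ))]
    simp
  · simp [hQ]

lemma cnt_split (P : Ω → Prop) (f : Ω → AppUse) :
    cnt P = cnt (fun ω => P ω ∧ f ω = AppUse.app) +
      cnt (fun ω => P ω ∧ f ω = AppUse.noapp) := by
  classical
  simp only [cnt_eq_sum, ← Finset.sum_add_distrib]
  apply Finset.sum_congr rfl
  intro ω _
  cases h : f ω <;> by_cases hp : P ω <;> simp [h, hp]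

end


lemma statement15_alg (c x NA TA NG TG NT MA MG : ℝ)
    (hNA : 0 < NA) (hNG : 0 < NG) (hNT : 0 < NT)
    (h1 : 0 < 1 - x * (TA / NA)) (h2 : 0 < 1 - x * (TG / NG))
    (hMA : MA = c * (NA - x * TA)) (hMG : MG = c * (NG - x * TG)) :
    MA / NT / (1 - x * (TA / NA)) = NA / NG * (MG / NT / (1 - x * (TG / NG))) := by
  have hNA' : NA ≠ 0 := ne_of_gt hNA
  have hNG' : NG ≠ 0 := ne_of_gt hNG
  have hNT' : NT ≠ 0 := ne_of_gt hNT
  have e1 : 1 - x * (TA / NA) = (NA - x * TA) / NA := by field_simp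
  have e2 : 1 - x * (TG / NG) = (NG - x * TG) / NG := by field_simp
  have d1 : NA - x * TA ≠ 0 := by
    rw [e1] at h1
    have := (div_pos_iff.mp h1)
    rcases this with ⟨h, _⟩ | ⟨_, h⟩
    · exact ne_of_gt h
    · linarith
  have d2 : NG - x * TG ≠ 0 := by
    rw [e2] at h2
    have := (div_pos_iff.mp h2)
    rcases this with ⟨h, _⟩ | ⟨_, h⟩
    · exact ne_of_gt h
    · linarith
  rw [hMA, hMG, e1, e2]
  field_simp

set_option maxHeartbeats 1000000 in
/-- relation between the app-refined and the aggregated weights in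
the time-evolution equation, cf. Eq. (20) of the paper.  Epidemic setting with
severity `G`, app usage `A`, testing time `τ^T` and isolation probabilities `ξ`.  Let
`τ > 0`, `g` in the range of `G`, `a ∈ {app, no app}` with `Ω_{t−τ,g,a}` nonempty.
Assume (i) there is `c` (independent of `a`) with
`E_{P_{t−τ,g,a'}}(n^τ) = c·(1 − ξ_{t−τ}·F^T_{t−τ,g,a'}(τ))` for each `a'` with
`Ω_{t−τ,g,a'}` nonempty; (ii) on `Ω_{t−τ}`, `A` is independent of `G`; and (iii) the
two denominators are positive.  Then
`P_t(τ^σ = τ, Ĝ = g, Â = a)/(1 − ξ_{t−τ}·F^T_{t−τ,g,a}(τ)) = ε_{t−τ,a} · P_t(τ^σ = τ, Ĝ = g)/(1 − ξ_{t−τ}·F^T_{t−τ,g}(τ))`. -/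
theorem statement_15 {Ω : Type*} [Fintype Ω] (tI : Ω → ℝ) (σ : Ω → Ω)
    (hσ : ∀ ω, 0 < tI ω → tI (σ ω) < tI ω)
    (G : Ω → ℝ) (A : Ω → AppUse) (τT : Ω → ℝ≥0∞) (ξ : ℝ → ℝ)
    (hξ : ∀ s : ℝ, 0 ≤ ξ s ∧ ξ s ≤ 1) (t : ℝ)
    (hne : (Finset.univ.filter (fun ω => tI ω = t)).Nonempty)
    (τ : ℝ) (hτ : 0 < τ) (g : ℝ) (hg : ∃ ω, G ω = g) (a : AppUse)
    (hnea : (Finset.univ.filter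
      (fun ω => tI ω = t - τ ∧ G ω = g ∧ A ω = a)).Nonempty)
    (hc : ∃ c : ℝ, ∀ a' : AppUse,
      (Finset.univ.filter (fun ω => tI ω = t - τ ∧ G ω = g ∧ A ω = a')).Nonempty →
        expecC (fun ω => tI ω = t - τ ∧ G ω = g ∧ A ω = a') (ninf tI σ τ) =
          c * (1 - ξ (t - τ) * FTa tI G A τT (t - τ) g a' τ))
    (hAind : ∀ (a' : AppUse) (g' : ℝ),
      (Finset.univ.filter (fun ω => tI ω = t - τ ∧ G ω = g')).Nonempty →
        prC (fun ω => tI ω = t - τ ∧ G ω = g') (fun ω => A ω = a') =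
          prC (fun ω => tI ω = t - τ) (fun ω => A ω = a'))
    (hpos1 : 0 < 1 - ξ (t - τ) * FTa tI G A τT (t - τ) g a τ)
    (hpos2 : 0 < 1 - ξ (t - τ) * FT tI G τT (t - τ) g τ) :
    prC (fun ω => tI ω = t)
        (fun ω => 0 < tI ω ∧ tI ω - tI (σ ω) = τ ∧ G (σ ω) = g ∧ A (σ ω) = a) /
      (1 - ξ (t - τ) * FTa tI G A τT (t - τ) g a τ) =
    prC (fun ω => tI ω = t - τ) (fun ω => A ω = a) *
      (prC (fun ω => tI ω = t)
          (fun ω => 0 < tI ω ∧ tI ω - tI (σ ω) = τ ∧ G (σ ω) = g) /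
        (1 - ξ (t - τ) * FT tI G τT (t - τ) g τ)) := by
  classical
  obtain ⟨c, hc⟩ := hc
  -- the key computation: for each a', the numerator count equals c * (Na' - ξ·Ta')
  have key : ∀ a' : AppUse,
      cnt (fun ω => tI ω = t ∧ 0 < tI ω ∧ tI ω - tI (σ ω) = τ ∧ G (σ ω) = g ∧ A (σ ω) = a') =
        c * (cnt (fun ω => tI ω = t - τ ∧ G ω = g ∧ A ω = a')
          - ξ (t - τ) * cnt (fun ω => (tI ω = t - τ ∧ G ω = g ∧ A ω = a') ∧
              (τT ω : EReal) ≤ (τ : ℝ))) := by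
    intro a'
    have h1 : ∀ ω : Ω, ninf tI σ τ ω =
        cnt (fun ω' => (0 < tI ω' ∧ tI ω' - tI (σ ω') = τ) ∧ σ ω' = ω) := by
      intro ω
      exact cnt_congr (fun ω' => by tauto)
    have hflat : cnt (fun ω' => (0 < tI ω' ∧ tI ω' - tI (σ ω') = τ) ∧
          (tI (σ ω') = t - τ ∧ G (σ ω') = g ∧ A (σ ω') = a')) =
        cnt (fun ω' => tI ω' = t ∧ 0 < tI ω' ∧ tI ω' - tI (σ ω') = τ ∧
          G (σ ω') = g ∧ A (σ ω') = a') := by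
      refine cnt_congr (fun ω' => ?_)
      constructor
      · rintro ⟨⟨h1', h2⟩, h3, h4, h5⟩
        exact ⟨by linarith, h1', h2, h4, h5⟩
      · rintro ⟨h0, h1', h2, h4, h5⟩
        exact ⟨⟨h1', h2⟩, by linarith, h4, h5⟩
    by_cases hN : ∃ ω, tI ω = t - τ ∧ G ω = g ∧ A ω = a'
    · have hNapos : 0 < cnt (fun ω => tI ω = t - τ ∧ G ω = g ∧ A ω = a') :=
        cnt_pos_of_exists hN
      have hNane : cnt (fun ω => tI ω = t - τ ∧ G ω = g ∧ A ω = a') ≠ 0 := ne_of_gt hNapos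
      obtain ⟨ωw, hωw⟩ := hN
      have hE := hc a' ⟨ωw, Finset.mem_filter.mpr ⟨Finset.mem_univ _, hωw⟩⟩
      have hft : FTa tI G A τT (t - τ) g a' τ =
          cnt (fun ω => (tI ω = t - τ ∧ G ω = g ∧ A ω = a') ∧ (τT ω : EReal) ≤ (τ : ℝ)) /
            cnt (fun ω => tI ω = t - τ ∧ G ω = g ∧ A ω = a') := rfl
      rw [hft] at hE
      have hsum : expecC (fun ω => tI ω = t - τ ∧ G ω = g ∧ A ω = a') (ninf tI σ τ) *
          cnt (fun ω => tI ω = t - τ ∧ G ω = g ∧ A ω = a') =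
          cnt (fun ω' => tI ω' = t ∧ 0 < tI ω' ∧ tI ω' - tI (σ ω') = τ ∧
            G (σ ω') = g ∧ A (σ ω') = a') := by
        rw [expecC, div_mul_cancel₀ _ hNane]
        rw [Finset.sum_congr rfl (fun ω _ => h1 ω)]
        rw [sum_cnt_fiber (fun ω => tI ω = t - τ ∧ G ω = g ∧ A ω = a')
          (fun ω' => 0 < tI ω' ∧ tI ω' - tI (σ ω') = τ) σ]
        exact hflat
      rw [← hsum, hE]
      field_simp
    · push_neg at hN
      have h0 : cnt (fun ω => tI ω = t - τ ∧ G ω = g ∧ A ω = a') = 0 :=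
        (cnt_eq_zero_iff _).mpr (fun ω h => by
          have := hN ω; tauto)
      have h1' : cnt (fun ω => (tI ω = t - τ ∧ G ω = g ∧ A ω = a') ∧
          (τT ω : EReal) ≤ (τ : ℝ)) = 0 :=
        (cnt_eq_zero_iff _).mpr (fun ω h => by
          have := hN ω; tauto)
      have h2 : cnt (fun ω => tI ω = t ∧ 0 < tI ω ∧ tI ω - tI (σ ω) = τ ∧
          G (σ ω) = g ∧ A (σ ω) = a') = 0 := by
        refine (cnt_eq_zero_iff _).mpr ?_
        rintro ω ⟨ha, hb, hcd, hd, he⟩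
        have h5 := hN (σ ω)
        have : tI (σ ω) = t - τ := by linarith
        tauto
      rw [h0, h1', h2]
      ring
  -- splits over app usage
  have hMsplit : cnt (fun ω => tI ω = t ∧ 0 < tI ω ∧ tI ω - tI (σ ω) = τ ∧ G (σ ω) = g) =
      cnt (fun ω => tI ω = t ∧ 0 < tI ω ∧ tI ω - tI (σ ω) = τ ∧ G (σ ω) = g ∧
        A (σ ω) = AppUse.app) +
      cnt (fun ω => tI ω = t ∧ 0 < tI ω ∧ tI ω - tI (σ ω) = τ ∧ G (σ ω) = g ∧
        A (σ ω) = AppUse.noapp) := by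
    rw [cnt_split (fun ω => tI ω = t ∧ 0 < tI ω ∧ tI ω - tI (σ ω) = τ ∧ G (σ ω) = g)
      (fun ω => A (σ ω))]
    congr 1 <;> exact cnt_congr (fun ω => by tauto)
  have hNsplit : cnt (fun ω => tI ω = t - τ ∧ G ω = g) =
      cnt (fun ω => tI ω = t - τ ∧ G ω = g ∧ A ω = AppUse.app) +
      cnt (fun ω => tI ω = t - τ ∧ G ω = g ∧ A ω = AppUse.noapp) := by
    rw [cnt_split (fun ω => tI ω = t - τ ∧ G ω = g) A]
    congr 1 <;> exact cnt_congr (fun ω => by tauto)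
  have hTsplit : cnt (fun ω => (tI ω = t - τ ∧ G ω = g) ∧ (τT ω : EReal) ≤ (τ : ℝ)) =
      cnt (fun ω => (tI ω = t - τ ∧ G ω = g ∧ A ω = AppUse.app) ∧
        (τT ω : EReal) ≤ (τ : ℝ)) +
      cnt (fun ω => (tI ω = t - τ ∧ G ω = g ∧ A ω = AppUse.noapp) ∧
        (τT ω : EReal) ≤ (τ : ℝ)) := by
    rw [cnt_split (fun ω => (tI ω = t - τ ∧ G ω = g) ∧ (τT ω : EReal) ≤ (τ : ℝ)) A]
    congr 1 <;> exact cnt_congr (fun ω => by tauto)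
  -- positivity of the various counts
  obtain ⟨ω0, hω0⟩ := hnea
  rw [Finset.mem_filter] at hω0
  have hNapos : 0 < cnt (fun ω => tI ω = t - τ ∧ G ω = g ∧ A ω = a) :=
    cnt_pos_of_exists ⟨ω0, hω0.2⟩
  have hNgpos : 0 < cnt (fun ω => tI ω = t - τ ∧ G ω = g) := by
    have h1 := cnt_nonneg (fun ω => tI ω = t - τ ∧ G ω = g ∧ A ω = AppUse.app) (Ω := Ω)
    have h2 := cnt_nonneg (fun ω => tI ω = t - τ ∧ G ω = g ∧ A ω = AppUse.noapp) (Ω := Ω)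
    cases a <;> rw [hNsplit] <;> linarith
  obtain ⟨ωt, hωt⟩ := hne
  rw [Finset.mem_filter] at hωt
  have hNtpos : 0 < cnt (fun ω => tI ω = t) := cnt_pos_of_exists ⟨ωt, hωt.2⟩
  -- independence gives ε = Na / Ng
  have hgne : (Finset.univ.filter (fun ω => tI ω = t - τ ∧ G ω = g)).Nonempty :=
    ⟨ω0, Finset.mem_filter.mpr ⟨Finset.mem_univ _, hω0.2.1, hω0.2.2.1⟩⟩
  have hε : prC (fun ω => tI ω = t - τ) (fun ω => A ω = a) =
      cnt (fun ω => tI ω = t - τ ∧ G ω = g ∧ A ω = a) /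
        cnt (fun ω => tI ω = t - τ ∧ G ω = g) := by
    rw [← hAind a g hgne]
    unfold prC
    congr 1
    exact cnt_congr (fun ω => by tauto)
  -- rewrite the goal into pure algebra
  have hft : FTa tI G A τT (t - τ) g a τ =
      cnt (fun ω => (tI ω = t - τ ∧ G ω = g ∧ A ω = a) ∧ (τT ω : EReal) ≤ (τ : ℝ)) /
        cnt (fun ω => tI ω = t - τ ∧ G ω = g ∧ A ω = a) := rfl
  have hftg : FT tI G τT (t - τ) g τ =
      cnt (fun ω => (tI ω = t - τ ∧ G ω = g) ∧ (τT ω : EReal) ≤ (τ : ℝ)) /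
        cnt (fun ω => tI ω = t - τ ∧ G ω = g) := rfl
  have hnum1 : prC (fun ω => tI ω = t)
      (fun ω => 0 < tI ω ∧ tI ω - tI (σ ω) = τ ∧ G (σ ω) = g ∧ A (σ ω) = a) =
      cnt (fun ω => tI ω = t ∧ 0 < tI ω ∧ tI ω - tI (σ ω) = τ ∧ G (σ ω) = g ∧
        A (σ ω) = a) / cnt (fun ω => tI ω = t) := rfl
  have hnum2 : prC (fun ω => tI ω = t)
      (fun ω => 0 < tI ω ∧ tI ω - tI (σ ω) = τ ∧ G (σ ω) = g) =
      cnt (fun ω => tI ω = t ∧ 0 < tI ω ∧ tI ω - tI (σ ω) = τ ∧ G (σ ω) = g) /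
        cnt (fun ω => tI ω = t) := rfl
  rw [hft] at hpos1
  rw [hftg] at hpos2
  have hMG : cnt (fun ω => tI ω = t ∧ 0 < tI ω ∧ tI ω - tI (σ ω) = τ ∧ G (σ ω) = g) =
      c * (cnt (fun ω => tI ω = t - τ ∧ G ω = g) -
        ξ (t - τ) * cnt (fun ω => (tI ω = t - τ ∧ G ω = g) ∧ (τT ω : EReal) ≤ (τ : ℝ))) := by
    rw [hMsplit, key AppUse.app, key AppUse.noapp, hNsplit, hTsplit]
    ring
  rw [hnum1, hnum2, hε, hft, hftg]
  exact statement15_alg c (ξ (t - τ)) _ _ _ _ _ _ _ hNapos hNgpos hNtpos hpos1 hpos2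
    (key a) hMG
end

section
/- In the epidemic setting with severity, testing and app usage, let t ∈ ℝ with Ω_t nonempty, let a ∈ {app, no app}, and assume the app-refined suppression hypothesis holds at all times t' < t. Define F̌^{T,a}_t(ρ) := P_t(τ̌^T_t ≤ ρ and Â_t = a), where τ̌^T(ω) := τ^T(σ(ω)) − τ^σ(ω). Then for every ρ > 0, F̌^{T,a}_t(ρ) − F̌^{T,a}_t(0) = Σ_g Σ_{τ > 0} ((F^T_{t−τ,g,a}(ρ + τ) − F^T_{t−τ,g,a}(τ))/(1 − ξ_{t−τ}·F^T_{t−τ,g,a}(τ))) · P_t(τ^σ_t = τ, Ĝ_t = g, Â_t = a), where g ranges over the range of G and the sum over τ runs over the finitely many positive generation times with Ω_{t−τ,g,a} nonempty. -/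
open Finset
open scoped Classical ENNReal NNReal

instance : Fintype AppUse :=
  ⟨{AppUse.app, AppUse.noapp}, fun x => by cases x <;> simp⟩


/-! ### Auxiliary lemmas -/

lemma ereal_shift (x : ℝ≥0∞) (r s : ℝ) :
    (x : EReal) - (r : ℝ) ≤ (s : ℝ) ↔ (x : EReal) ≤ ((s + r : ℝ) : EReal) := by
  rw [EReal.sub_le_iff_le_add (.inl (EReal.coe_ne_bot r)) (.inl (EReal.coe_ne_top r)),
    EReal.coe_add]

lemma filter_univ_eq {Ω : Type*} [Fintype Ω] {P : Ω → Prop} {inst : DecidablePred P}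
    (s : Finset Ω) (h : ∀ ω, P ω ↔ ω ∈ s) : @Finset.filter Ω P inst univ = s := by
  ext ω; simp only [mem_filter, mem_univ, true_and]; exact h ω

lemma cnt_sub_cnt' {Ω : Type*} [Fintype Ω] (P Q D : Ω → Prop)
    (h : ∀ ω, Q ω → P ω) (hD : ∀ ω, D ω ↔ (P ω ∧ ¬ Q ω)) :
    cnt P - cnt Q = cnt D := by
  classical
  simp only [cnt]
  have hsub : univ.filter Q ⊆ univ.filter P := fun ω hω =>
    mem_filter.mpr ⟨mem_univ _, h ω (mem_filter.mp hω).2⟩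
  rw [← Nat.cast_sub (card_le_card hsub), ← card_sdiff_of_subset hsub]
  congr 2
  ext ω
  simp only [mem_sdiff, mem_filter, mem_univ, true_and]
  exact (hD ω).symm

lemma cnt_sub_cnt {Ω : Type*} [Fintype Ω] {P Q : Ω → Prop} {instP : DecidablePred P}
    {instQ : DecidablePred Q} (h : ∀ ω, Q ω → P ω) (s : Finset Ω)
    (hs : ∀ ω, (P ω ∧ ¬ Q ω) ↔ ω ∈ s) :
    (((@Finset.filter Ω P instP univ).card : ℝ) : ℝ) -
      (((@Finset.filter Ω Q instQ univ).card : ℝ) : ℝ) = (s.card : ℝ) := by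
  classical
  have hsub : @Finset.filter Ω Q instQ univ ⊆ @Finset.filter Ω P instP univ := fun ω hω =>
    mem_filter.mpr ⟨mem_univ _, h ω (mem_filter.mp hω).2⟩
  rw [← Nat.cast_sub (card_le_card hsub), ← card_sdiff_of_subset hsub]
  congr 2
  ext ω
  simp only [mem_sdiff, mem_filter, mem_univ, true_and]
  exact hs ω

lemma cnt_fiberwise {Ω β : Type*} [Fintype Ω] [DecidableEq β] (P : Ω → Prop)
    (f : Ω → β) (t : Finset β) (h : ∀ ω, P ω → f ω ∈ t) :
    cnt P = ∑ b ∈ t, cnt (fun ω => P ω ∧ f ω = b) := by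
  classical
  simp only [cnt]
  rw [← Nat.cast_sum]
  norm_cast
  rw [card_eq_sum_card_fiberwise (f := f) (t := t)
    (fun ω hω => h ω (mem_filter.mp hω).2)]
  refine Finset.sum_congr rfl fun b _ => ?_
  congr 1
  ext ω
  simp only [mem_filter, mem_univ, true_and, and_assoc]

lemma prC_pos {Ω : Type*} [Fintype Ω] (C E : Ω → Prop) (ω₀ : Ω)
    (h₀ : C ω₀ ∧ E ω₀) : 0 < prC C E := by
  simp only [prC, cnt]
  refine div_pos ?_ ?_
  · rw [Nat.cast_pos, card_pos]
    exact ⟨ω₀, by simp only [Finset.mem_filter]; exact ⟨mem_univ _, h₀⟩⟩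
  · rw [Nat.cast_pos, card_pos]
    exact ⟨ω₀, by simp only [Finset.mem_filter]; exact ⟨mem_univ _, h₀.1⟩⟩

lemma expecC_congr {Ω : Type*} [Fintype Ω] (C C' : Ω → Prop) (X : Ω → ℝ)
    (h : ∀ ω, C ω ↔ C' ω) : expecC C X = expecC C' X := by
  have hf : univ.filter C = univ.filter C' := by
    ext ω; simp only [mem_filter, mem_univ, true_and]; exact h ω
  simp only [expecC, cnt, hf]

lemma cnt_eq_sum_ninf {Ω : Type*} [Fintype Ω] (tI : Ω → ℝ) (σ : Ω → Ω) (τ : ℝ)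
    (P : Ω → Prop) (T' : Finset Ω)
    (hP : ∀ ω, P ω ↔ (0 < tI ω ∧ tI ω - tI (σ ω) = τ ∧ σ ω ∈ T')) :
    cnt P = ∑ ω' ∈ T', ninf tI σ τ ω' := by
  classical
  simp only [ninf, cnt]
  rw [← Nat.cast_sum]
  norm_cast
  rw [card_eq_sum_card_fiberwise (f := σ) (t := T')
    (fun ω hω => ((hP ω).mp (mem_filter.mp hω).2).2.2)]
  refine Finset.sum_congr rfl fun ω' hω' => ?_
  congr 1
  ext ω
  simp only [mem_filter, mem_univ, true_and]
  constructor
  · rintro ⟨hPω, hσ⟩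
    obtain ⟨h1, h2, _⟩ := (hP ω).mp hPω
    exact ⟨h1, hσ, h2⟩
  · rintro ⟨h1, hσ, h2⟩
    exact ⟨(hP ω).mpr ⟨h1, h2, hσ ▸ hω'⟩, hσ⟩

lemma sum_split {Ω : Type*} [Fintype Ω] (pred : Ω → Prop) (n : Ω → ℝ) (τT : Ω → ℝ≥0∞)
    (ξv τ ρ : ℝ) (hρ : 0 ≤ ρ)
    (hne : (univ.filter pred).Nonempty)
    (hden : 0 < 1 - ξv * prC pred (fun ω => (τT ω : EReal) ≤ (τ : ℝ)))
    (hsup : ∀ ρ' : ℝ≥0∞, 0 < prC pred (fun ω => τT ω = ρ') →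
      expecC (fun ω => pred ω ∧ τT ω = ρ') n =
        ((1 - ξv * if (ρ' : EReal) ≤ (τ : ℝ) then (1 : ℝ) else 0) /
          (1 - ξv * prC pred (fun ω => (τT ω : EReal) ≤ (τ : ℝ)))) * expecC pred n) :
    ∑ ω ∈ univ.filter (fun ω => pred ω ∧ ¬((τT ω : EReal) ≤ (τ : ℝ)) ∧
        (τT ω : EReal) ≤ ((ρ + τ : ℝ) : EReal)), n ω
      = ((prC pred (fun ω => (τT ω : EReal) ≤ ((ρ + τ : ℝ) : EReal)) -
            prC pred (fun ω => (τT ω : EReal) ≤ (τ : ℝ))) /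
          (1 - ξv * prC pred (fun ω => (τT ω : EReal) ≤ (τ : ℝ)))) *
        ∑ ω ∈ univ.filter pred, n ω := by
  classical
  set T : Finset Ω := univ.filter pred with hT
  set Fτ : ℝ := prC pred (fun ω => (τT ω : EReal) ≤ (τ : ℝ)) with hFτ
  have hcT : (0 : ℝ) < T.card := by exact_mod_cast card_pos.mpr hne
  set cond : ℝ≥0∞ → Prop :=
    fun ρ' => ¬((ρ' : EReal) ≤ (τ : ℝ)) ∧ (ρ' : EReal) ≤ ((ρ + τ : ℝ) : EReal) with hcond
  set T₁ : Finset Ω := univ.filter (fun ω => pred ω ∧ cond (τT ω)) with hT₁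
  set R₁ : Finset ℝ≥0∞ := (T.image τT).filter cond with hR₁
  have hmap : ∀ ω ∈ T₁, τT ω ∈ R₁ := by
    intro ω hω
    rw [hT₁, mem_filter] at hω
    exact mem_filter.mpr ⟨mem_image_of_mem τT (mem_filter.mpr ⟨mem_univ _, hω.2.1⟩), hω.2.2⟩
  have hfib : ∀ ρ' ∈ R₁, T₁.filter (fun ω => τT ω = ρ') = T.filter (fun ω => τT ω = ρ') := by
    intro ρ' hρ'
    rw [mem_filter] at hρ'
    ext ω
    simp only [hT₁, hT, mem_filter, mem_univ, true_and]
    constructor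
    · rintro ⟨⟨h1, _⟩, h3⟩; exact ⟨h1, h3⟩
    · rintro ⟨h1, h3⟩; exact ⟨⟨h1, h3 ▸ hρ'.2⟩, h3⟩
  have hfibval : ∀ ρ' ∈ R₁, ∑ ω ∈ T.filter (fun ω => τT ω = ρ'), n ω =
      ((T.filter (fun ω => τT ω = ρ')).card : ℝ) *
        ((1 / (1 - ξv * Fτ)) * expecC pred n) := by
    intro ρ' hρ'
    rw [mem_filter] at hρ'
    obtain ⟨ω₀, hω₀⟩ := mem_image.mp hρ'.1
    have hfne : (T.filter (fun ω => τT ω = ρ')).Nonempty :=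
      ⟨ω₀, mem_filter.mpr ⟨hω₀.1, hω₀.2⟩⟩
    have hcF : (0 : ℝ) < (T.filter (fun ω => τT ω = ρ')).card := by
      exact_mod_cast card_pos.mpr hfne
    have hflt : ∀ ω, (pred ω ∧ τT ω = ρ') ↔ ω ∈ T.filter (fun ω => τT ω = ρ') := by
      intro ω
      simp only [hT, mem_filter, mem_univ, true_and]
    have hprC : 0 < prC pred (fun ω => τT ω = ρ') := by
      simp only [prC, cnt]
      rw [filter_univ_eq _ hflt]
      exact div_pos hcF hcT
    have hE := hsup ρ' hprC
    rw [if_neg hρ'.2.1] at hE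
    have hEC : expecC (fun ω => pred ω ∧ τT ω = ρ') n =
        (∑ ω ∈ T.filter (fun ω => τT ω = ρ'), n ω) /
          ((T.filter (fun ω => τT ω = ρ')).card : ℝ) := by
      simp only [expecC, cnt]
      rw [filter_univ_eq _ hflt]
    rw [hEC] at hE
    rw [div_eq_iff (ne_of_gt hcF)] at hE
    rw [hE]; ring
  have hsum1 : ∑ ω ∈ T₁, n ω =
      ∑ ρ' ∈ R₁, ∑ ω ∈ T₁.filter (fun ω => τT ω = ρ'), n ω :=
    (sum_fiberwise_of_maps_to hmap n).symm
  have hsum2 : ∑ ω ∈ T₁, n ω =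
      (∑ ρ' ∈ R₁, ((T.filter (fun ω => τT ω = ρ')).card : ℝ)) *
        ((1 / (1 - ξv * Fτ)) * expecC pred n) := by
    rw [hsum1, Finset.sum_mul]
    refine Finset.sum_congr rfl fun ρ' hρ' => ?_
    rw [hfib ρ' hρ', hfibval ρ' hρ']
  have hcard : (T₁.card : ℝ) = ∑ ρ' ∈ R₁, ((T.filter (fun ω => τT ω = ρ')).card : ℝ) := by
    rw [card_eq_sum_card_fiberwise hmap]
    push_cast
    exact Finset.sum_congr rfl fun ρ' hρ' => by rw [hfib ρ' hρ']
  have hmono : ∀ ω, (pred ω ∧ (τT ω : EReal) ≤ (τ : ℝ)) →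
      (pred ω ∧ (τT ω : EReal) ≤ ((ρ + τ : ℝ) : EReal)) := by
    intro ω hω
    exact ⟨hω.1, le_trans hω.2 (EReal.coe_le_coe_iff.mpr (by linarith))⟩
  have hdiff : prC pred (fun ω => (τT ω : EReal) ≤ ((ρ + τ : ℝ) : EReal)) - Fτ =
      (T₁.card : ℝ) / (T.card : ℝ) := by
    rw [hFτ]
    simp only [prC, cnt]
    rw [div_sub_div_same]
    rw [cnt_sub_cnt hmono T₁ (by
      intro ω
      simp only [hT₁, hcond, mem_filter, mem_univ, true_and]
      tauto)]
  have hEpred : expecC pred n = (∑ ω ∈ T, n ω) / (T.card : ℝ) := by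
    simp only [expecC, cnt]
    rfl
  have h1 : (1 - ξv * Fτ) ≠ 0 := ne_of_gt hden
  have h2 : ((T.card : ℝ)) ≠ 0 := ne_of_gt hcT
  rw [hsum2, ← hcard, hdiff, hEpred]
  field_simp

lemma sum_split' {Ω : Type*} [Fintype Ω] (pred : Ω → Prop) (n : Ω → ℝ) (τT : Ω → ℝ≥0∞)
    (ξv τ ρ : ℝ) (hρ : 0 ≤ ρ) (S T : Finset Ω)
    (hS : ∀ ω, ω ∈ S ↔ (pred ω ∧ ¬((τT ω : EReal) ≤ (τ : ℝ)) ∧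
        (τT ω : EReal) ≤ ((ρ + τ : ℝ) : EReal)))
    (hT : ∀ ω, ω ∈ T ↔ pred ω)
    (hne : T.Nonempty)
    (hden : 0 < 1 - ξv * prC pred (fun ω => (τT ω : EReal) ≤ (τ : ℝ)))
    (hsup : ∀ ρ' : ℝ≥0∞, 0 < prC pred (fun ω => τT ω = ρ') →
      expecC (fun ω => pred ω ∧ τT ω = ρ') n =
        ((1 - ξv * if (ρ' : EReal) ≤ (τ : ℝ) then (1 : ℝ) else 0) /
          (1 - ξv * prC pred (fun ω => (τT ω : EReal) ≤ (τ : ℝ)))) * expecC pred n) :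
    ∑ ω ∈ S, n ω
      = ((prC pred (fun ω => (τT ω : EReal) ≤ ((ρ + τ : ℝ) : EReal)) -
            prC pred (fun ω => (τT ω : EReal) ≤ (τ : ℝ))) /
          (1 - ξv * prC pred (fun ω => (τT ω : EReal) ≤ (τ : ℝ)))) *
        ∑ ω ∈ T, n ω := by
  classical
  have h1 : univ.filter (fun ω => pred ω ∧ ¬((τT ω : EReal) ≤ (τ : ℝ)) ∧
      (τT ω : EReal) ≤ ((ρ + τ : ℝ) : EReal)) = S :=
    filter_univ_eq S (fun ω => (hS ω).symm)
  have h2 : univ.filter pred = T := filter_univ_eq T (fun ω => (hT ω).symm)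
  rw [← h1, ← h2]
  exact sum_split pred n τT ξv τ ρ hρ (by rw [h2]; exact hne) hden hsup
/-- app-refined CDF of the infector's testing time.  Epidemic
setting with severity `G`, app usage `A`, testing time `τ^T : Ω → [0,∞]` (convention
`+∞ − τ = +∞`, realized in `EReal`) and `ξ : ℝ → [0,1]`.  With
`F̌^{T,a}_t(ρ) := P_t(τ̌^T_t ≤ ρ ∧ Â_t = a)` where `τ̌^T(ω) := τ^T(σ ω) − τ^σ(ω)`,
assuming the app-refined suppression hypothesis at all `t' < t`, for every `ρ > 0`:
`F̌^{T,a}_t(ρ) − F̌^{T,a}_t(0) = Σ_g Σ_{τ>0} ((F^T_{t−τ,g,a}(ρ+τ) − F^T_{t−τ,g,a}(τ))/(1 − ξ_{t−τ}·F^T_{t−τ,g,a}(τ))) · P_t(τ^σ_t = τ, Ĝ_t = g, Â_t = a)`,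
`g` ranging over the range of `G` and `τ` over the finitely many positive generation
times with `Ω_{t−τ,g,a}` nonempty. -/
theorem statement_16 {Ω : Type*} [Fintype Ω] (tI : Ω → ℝ) (σ : Ω → Ω)
    (hσ : ∀ ω, 0 < tI ω → tI (σ ω) < tI ω)
    (G : Ω → ℝ) (A : Ω → AppUse) (τT : Ω → ℝ≥0∞) (ξ : ℝ → ℝ)
    (hξ : ∀ s : ℝ, 0 ≤ ξ s ∧ ξ s ≤ 1) (t : ℝ)
    (hne : (Finset.univ.filter (fun ω => tI ω = t)).Nonempty) (a : AppUse)
    (hsup : ∀ t' : ℝ, t' < t → ∀ (g : ℝ) (a' : AppUse),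
      (Finset.univ.filter (fun ω => tI ω = t' ∧ G ω = g ∧ A ω = a')).Nonempty →
      ∀ τ : ℝ, 0 < τ → ∀ ρ' : ℝ≥0∞,
        0 < prC (fun ω => tI ω = t' ∧ G ω = g ∧ A ω = a') (fun ω => τT ω = ρ') →
          0 < 1 - ξ t' * FTa tI G A τT t' g a' τ ∧
          expecC (fun ω => tI ω = t' ∧ G ω = g ∧ A ω = a' ∧ τT ω = ρ')
              (ninf tI σ τ) =
            ((1 - ξ t' * (if (ρ' : EReal) ≤ (τ : ℝ) then (1 : ℝ) else 0)) /
                (1 - ξ t' * FTa tI G A τT t' g a' τ)) *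
              expecC (fun ω => tI ω = t' ∧ G ω = g ∧ A ω = a') (ninf tI σ τ)) :
    ∀ ρ : ℝ, 0 < ρ →
      prC (fun ω => tI ω = t)
          (fun ω => 0 < tI ω ∧
            (τT (σ ω) : EReal) - ((tI ω - tI (σ ω) : ℝ) : EReal) ≤ (ρ : ℝ) ∧
            A (σ ω) = a) -
        prC (fun ω => tI ω = t)
          (fun ω => 0 < tI ω ∧
            (τT (σ ω) : EReal) - ((tI ω - tI (σ ω) : ℝ) : EReal) ≤ ((0 : ℝ) : EReal) ∧
            A (σ ω) = a) =
      ∑ g ∈ Finset.univ.image G, ∑ τ ∈ genTimesGA tI G A t g a,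
        ((FTa tI G A τT (t - τ) g a (ρ + τ) - FTa tI G A τT (t - τ) g a τ) /
            (1 - ξ (t - τ) * FTa tI G A τT (t - τ) g a τ)) *
          prC (fun ω => tI ω = t)
            (fun ω => 0 < tI ω ∧ tI ω - tI (σ ω) = τ ∧ G (σ ω) = g ∧ A (σ ω) = a) := by
  classical
  intro ρ hρ
  simp only [prC]
  rw [div_sub_div_same]
  set D : Ω → Prop := fun ω => tI ω = t ∧ 0 < tI ω ∧ A (σ ω) = a ∧
      ¬((τT (σ ω) : EReal) - ((tI ω - tI (σ ω) : ℝ) : EReal) ≤ ((0 : ℝ) : EReal)) ∧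
      ((τT (σ ω) : EReal) - ((tI ω - tI (σ ω) : ℝ) : EReal) ≤ (ρ : ℝ)) with hDdef
  have himp : ∀ ω, (tI ω = t ∧ 0 < tI ω ∧
      (τT (σ ω) : EReal) - ((tI ω - tI (σ ω) : ℝ) : EReal) ≤ ((0 : ℝ) : EReal) ∧
      A (σ ω) = a) →
      (tI ω = t ∧ 0 < tI ω ∧
      (τT (σ ω) : EReal) - ((tI ω - tI (σ ω) : ℝ) : EReal) ≤ (ρ : ℝ) ∧
      A (σ ω) = a) := by
    intro ω h
    exact ⟨h.1, h.2.1, le_trans h.2.2.1 (EReal.coe_le_coe_iff.mpr hρ.le), h.2.2.2⟩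
  rw [cnt_sub_cnt' _ _ D himp (by intro ω; rw [hDdef]; tauto)]
  -- decompose the count over severities and generation times
  have hmemg : ∀ ω, D ω → G (σ ω) ∈ Finset.univ.image G :=
    fun ω _ => mem_image_of_mem _ (mem_univ _)
  have hdec : cnt D = ∑ g ∈ Finset.univ.image G, ∑ τ ∈ genTimesGA tI G A t g a,
      cnt (fun ω => (D ω ∧ G (σ ω) = g) ∧ tI ω - tI (σ ω) = τ) := by
    rw [cnt_fiberwise D (fun ω => G (σ ω)) (Finset.univ.image G) hmemg]
    refine Finset.sum_congr rfl fun g _ => ?_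
    refine cnt_fiberwise (fun ω => D ω ∧ G (σ ω) = g) (fun ω => tI ω - tI (σ ω))
      (genTimesGA tI G A t g a) ?_
    intro ω hω
    obtain ⟨hDω, hGω⟩ := hω
    rw [hDdef] at hDω
    obtain ⟨h1, h2, h3, _, _⟩ := hDω
    simp only [genTimesGA, Finset.mem_filter, Finset.mem_image, Finset.mem_univ,
      true_and]
    exact ⟨⟨σ ω, ⟨hGω, h3⟩, by rw [h1]⟩, sub_pos.mpr (hσ ω h2)⟩
  rw [hdec, Finset.sum_div]
  refine Finset.sum_congr rfl fun g _ => ?_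
  rw [Finset.sum_div]
  refine Finset.sum_congr rfl fun τ hτ => ?_
  -- facts from membership in genTimesGA
  simp only [genTimesGA, Finset.mem_filter, Finset.mem_image, Finset.mem_univ,
    true_and] at hτ
  obtain ⟨⟨ω₀, ⟨hG₀, hA₀⟩, ht₀⟩, hτpos⟩ := hτ
  have htI₀ : tI ω₀ = t - τ := by linarith
  -- the suppression hypothesis at time t - τ
  have hlt : t - τ < t := by linarith
  have hne' : (Finset.univ.filter (fun ω => tI ω = t - τ ∧ G ω = g ∧ A ω = a)).Nonempty :=
    ⟨ω₀, by simp only [Finset.mem_filter, Finset.mem_univ, true_and]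
            exact ⟨htI₀, hG₀, hA₀⟩⟩
  have hsup_inst := hsup (t - τ) hlt g a hne' τ hτpos
  have hprC₀ : 0 < prC (fun ω => tI ω = t - τ ∧ G ω = g ∧ A ω = a)
      (fun ω => τT ω = τT ω₀) := prC_pos _ _ ω₀ ⟨⟨htI₀, hG₀, hA₀⟩, rfl⟩
  have hden' : 0 < 1 - ξ (t - τ) * prC (fun ω => tI ω = t - τ ∧ G ω = g ∧ A ω = a)
      (fun ω => (τT ω : EReal) ≤ (τ : ℝ)) := (hsup_inst (τT ω₀) hprC₀).1
  have hsup' : ∀ ρ' : ℝ≥0∞,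
      0 < prC (fun ω => tI ω = t - τ ∧ G ω = g ∧ A ω = a) (fun ω => τT ω = ρ') →
      expecC (fun ω => (tI ω = t - τ ∧ G ω = g ∧ A ω = a) ∧ τT ω = ρ')
          (ninf tI σ τ) =
        ((1 - ξ (t - τ) * if (ρ' : EReal) ≤ (τ : ℝ) then (1 : ℝ) else 0) /
          (1 - ξ (t - τ) * prC (fun ω => tI ω = t - τ ∧ G ω = g ∧ A ω = a)
            (fun ω => (τT ω : EReal) ≤ (τ : ℝ)))) *
          expecC (fun ω => tI ω = t - τ ∧ G ω = g ∧ A ω = a) (ninf tI σ τ) := by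
    intro ρ' hpos
    have h2 := (hsup_inst ρ' hpos).2
    rw [expecC_congr (fun ω => (tI ω = t - τ ∧ G ω = g ∧ A ω = a) ∧ τT ω = ρ')
      (fun ω => tI ω = t - τ ∧ G ω = g ∧ A ω = a ∧ τT ω = ρ') (ninf tI σ τ)
      (fun ω => by tauto)]
    exact h2
  -- apply the splitting identity
  have E1 := sum_split' (fun ω' => tI ω' = t - τ ∧ G ω' = g ∧ A ω' = a)
    (ninf tI σ τ) τT (ξ (t - τ)) τ ρ hρ.le
    (Finset.univ.filter (fun ω' => (tI ω' = t - τ ∧ G ω' = g ∧ A ω' = a) ∧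
      ¬((τT ω' : EReal) ≤ (τ : ℝ)) ∧ (τT ω' : EReal) ≤ ((ρ + τ : ℝ) : EReal)))
    (Finset.univ.filter (fun ω' => tI ω' = t - τ ∧ G ω' = g ∧ A ω' = a))
    (fun ω => by simp only [Finset.mem_filter, Finset.mem_univ, true_and])
    (fun ω => by simp only [Finset.mem_filter, Finset.mem_univ, true_and])
    hne' hden' hsup'
  -- express the two counts as sums of `ninf`
  have E2 : cnt (fun ω => (D ω ∧ G (σ ω) = g) ∧ tI ω - tI (σ ω) = τ) =
      ∑ ω' ∈ Finset.univ.filter (fun ω' => (tI ω' = t - τ ∧ G ω' = g ∧ A ω' = a) ∧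
        ¬((τT ω' : EReal) ≤ (τ : ℝ)) ∧ (τT ω' : EReal) ≤ ((ρ + τ : ℝ) : EReal)),
        ninf tI σ τ ω' := by
    refine cnt_eq_sum_ninf tI σ τ _ _ ?_
    intro ω
    rw [hDdef]
    simp only [Finset.mem_filter, Finset.mem_univ, true_and]
    constructor
    · rintro ⟨⟨⟨h1, h2, h3, h4, h5⟩, h6⟩, h7⟩
      rw [h7] at h4 h5
      refine ⟨h2, h7, ⟨⟨by linarith, h6, h3⟩, ?_, (ereal_shift _ τ ρ).mp h5⟩⟩
      intro hc
      exact h4 ((ereal_shift (τT (σ ω)) τ 0).mpr (by rwa [zero_add]))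
    · rintro ⟨h2, h7, ⟨ht', hg', ha'⟩, hn1, hn2⟩
      have h1 : tI ω = t := by linarith
      refine ⟨⟨⟨h1, h2, ha', ?_, ?_⟩, hg'⟩, h7⟩
      · rw [h7]
        intro hc
        have := (ereal_shift (τT (σ ω)) τ 0).mp hc
        rw [zero_add] at this
        exact hn1 this
      · rw [h7]
        exact (ereal_shift _ τ ρ).mpr hn2
  have E3 : cnt (fun ω => tI ω = t ∧ 0 < tI ω ∧ tI ω - tI (σ ω) = τ ∧
      G (σ ω) = g ∧ A (σ ω) = a) =
      ∑ ω' ∈ Finset.univ.filter (fun ω' => tI ω' = t - τ ∧ G ω' = g ∧ A ω' = a),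
        ninf tI σ τ ω' := by
    refine cnt_eq_sum_ninf tI σ τ _ _ ?_
    intro ω
    simp only [Finset.mem_filter, Finset.mem_univ, true_and]
    constructor
    · rintro ⟨h1, h2, h3, h4, h5⟩
      exact ⟨h2, h3, by linarith, h4, h5⟩
    · rintro ⟨h2, h3, ht', hg', ha'⟩
      exact ⟨by linarith, h2, h3, hg', ha'⟩
  rw [E2, E1, ← E3, mul_div_assoc]
  rfl
end
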